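/- Suppose a probability measure μ on a finite product space Ω₁ × ⋯ × Ω_n admits, for every pair of configurations (X₀, Y₀), a coupling (X₁, Y₁) of one step of the Glauber dynamics P satisfying E[d(X₁,Y₁)] ≤ κ·d(X₀,Y₀) for some metric d, with κ ≤ 1 − ε/n. Then μ is (1/ε)-spectrally independent. -/

import Mathlib

set_option linter.unusedSectionVars false
set_option linter.unusedVariables false
set_option maxHeartbeats 1000000


open Finset BigOperators

noncomputable section

variable {n : ℕ} {Ω : Fin n → Type*}

/-- Glauber dynamics for `μ` on a finite product space: resample a uniformly random
coordinate from its conditional law. -/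
def glauber [∀ i, Fintype (Ω i)] [∀ i, DecidableEq (Ω i)]
    (μ : (∀ i, Ω i) → ℝ) (x y : ∀ i, Ω i) : ℝ :=
  (1 / (n : ℝ)) * ∑ i, (if ∀ j, j ≠ i → y j = x j
    then μ y / ∑ a, μ (Function.update x i a) else 0)

/-- `P_μ[σ_i = a]` for a pair `u = (i,a)`. -/
def marg [∀ i, Fintype (Ω i)] [∀ i, DecidableEq (Ω i)]
    (μ : (∀ i, Ω i) → ℝ) (u : Σ i, Ω i) : ℝ :=
  ∑ x, if x u.1 = u.2 then μ x else 0

/-- `P_μ[σ_i = a ∧ σ_j = b]`. -/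
def pairMarg [∀ i, Fintype (Ω i)] [∀ i, DecidableEq (Ω i)]
    (μ : (∀ i, Ω i) → ℝ) (u v : Σ i, Ω i) : ℝ :=
  ∑ x, if x u.1 = u.2 ∧ x v.1 = v.2 then μ x else 0

/-- The correlation matrix `Ψ_μ` of the homogenized measure, indexed by pairs `(i, a)`:
`Ψ(u,v) = P[v | u] − P[v]` for `u ≠ v` and `1 − P[u]` on the diagonal. -/
def corrMatrixProd [∀ i, Fintype (Ω i)] [∀ i, DecidableEq (Ω i)]
    (μ : (∀ i, Ω i) → ℝ) : Matrix (Σ i, Ω i) (Σ i, Ω i) ℝ :=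
  fun u v => if u = v then 1 - marg μ u else pairMarg μ u v / marg μ u - marg μ v

section AuxOps
variable [∀ i, Fintype (Ω i)] [∀ i, DecidableEq (Ω i)]

/-- Normalizing constant of the conditional law at coordinate `i`. -/
def Zfun (μ : (∀ i, Ω i) → ℝ) (i : Fin n) (x : ∀ i, Ω i) : ℝ :=
  ∑ a, μ (Function.update x i a)

/-- Conditional expectation operator at coordinate `i`. -/
def PiOp (μ : (∀ i, Ω i) → ℝ) (i : Fin n) (h : (∀ i, Ω i) → ℝ) (x : ∀ i, Ω i) : ℝ :=
  (∑ a, μ (Function.update x i a) * h (Function.update x i a)) / Zfun μ i x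

/-- Markov operator of the Glauber dynamics. -/
def PopOp (μ : (∀ i, Ω i) → ℝ) (h : (∀ i, Ω i) → ℝ) (x : ∀ i, Ω i) : ℝ :=
  ∑ y, glauber μ x y * h y

/-- μ-weighted inner product. -/
def ip (μ : (∀ i, Ω i) → ℝ) (g h : (∀ i, Ω i) → ℝ) : ℝ := ∑ x, μ x * (g x * h x)

lemma sum_update_eq (x : ∀ i, Ω i) (i : Fin n) (F : (∀ i, Ω i) → ℝ) :
    (∑ y, if ∀ j, j ≠ i → y j = x j then F y else 0) = ∑ a, F (Function.update x i a) := by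
  classical
  rw [← Finset.sum_filter]
  have hupd : ∀ y ∈ Finset.univ.filter (fun y => ∀ j, j ≠ i → y j = x j),
      Function.update x i (y i) = y := by
    intro y hy
    simp only [Finset.mem_filter, Finset.mem_univ, true_and] at hy
    funext j
    by_cases hj : j = i
    · subst hj; simp
    · rw [Function.update_of_ne hj]; exact (hy j hj).symm
  refine Finset.sum_nbij' (fun y => y i) (fun a => Function.update x i a) ?_ ?_ ?_ ?_ ?_
  · intro a _; exact Finset.mem_univ _
  · intro a _
    simp only [Finset.mem_filter, Finset.mem_univ, true_and]
    intro j hj; exact Function.update_of_ne hj _ _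
  · intro y hy; exact hupd y hy
  · intro a _; simp
  · intro y hy; rw [hupd y hy]

lemma Zfun_update (μ : (∀ i, Ω i) → ℝ) (i : Fin n) (x : ∀ i, Ω i) (a : Ω i) :
    Zfun μ i (Function.update x i a) = Zfun μ i x := by
  unfold Zfun
  exact Finset.sum_congr rfl fun b _ => by rw [Function.update_idem]

def updEquiv (Ω : Fin n → Type*) [∀ i, DecidableEq (Ω i)] (i : Fin n) :
    ((∀ j, Ω j) × Ω i) ≃ ((∀ j, Ω j) × Ω i) where
  toFun p := (Function.update p.1 i p.2, p.1 i)
  invFun p := (Function.update p.1 i p.2, p.1 i)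
  left_inv p := by
    obtain ⟨x, a⟩ := p
    simp [Function.update_idem, Function.update_eq_self]
  right_inv p := by
    obtain ⟨x, a⟩ := p
    simp [Function.update_idem, Function.update_eq_self]

lemma ip_PiOp_symm (μ : (∀ i, Ω i) → ℝ) (i : Fin n) (g h : (∀ i, Ω i) → ℝ) :
    ip μ g (PiOp μ i h) = ip μ (PiOp μ i g) h := by
  unfold ip PiOp
  have expand : ∀ (g h : (∀ i, Ω i) → ℝ),
      (∑ x, μ x * (g x * ((∑ a, μ (Function.update x i a) * h (Function.update x i a))
        / Zfun μ i x)))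
      = ∑ p : (∀ j, Ω j) × Ω i, μ p.1 * g p.1 *
          (μ (Function.update p.1 i p.2) * h (Function.update p.1 i p.2)) / Zfun μ i p.1 := by
    intro g h
    rw [Fintype.sum_prod_type]
    refine Finset.sum_congr rfl fun x _ => ?_
    rw [Finset.sum_div, Finset.mul_sum, Finset.mul_sum]
    exact Finset.sum_congr rfl fun a _ => by ring
  rw [expand g h]
  have expand2 : (∑ x, μ x * ((∑ a, μ (Function.update x i a) * g (Function.update x i a))
        / Zfun μ i x * h x))
      = ∑ p : (∀ j, Ω j) × Ω i, μ p.1 * h p.1 *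
          (μ (Function.update p.1 i p.2) * g (Function.update p.1 i p.2)) / Zfun μ i p.1 := by
    rw [Fintype.sum_prod_type]
    refine Finset.sum_congr rfl fun x _ => ?_
    rw [Finset.sum_div, Finset.sum_mul, Finset.mul_sum]
    exact Finset.sum_congr rfl fun a _ => by ring
  rw [expand2]
  rw [← Equiv.sum_comp (updEquiv Ω i) (fun p : ((∀ j, Ω j) × Ω i) => μ p.1 * h p.1 *
          (μ (Function.update p.1 i p.2) * g (Function.update p.1 i p.2)) / Zfun μ i p.1)]
  refine Finset.sum_congr rfl fun p _ => ?_
  obtain ⟨x, a⟩ := p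
  show μ x * g x * (μ (Function.update x i a) * h (Function.update x i a)) / Zfun μ i x
    = μ (Function.update x i a) * h (Function.update x i a) *
      (μ (Function.update (Function.update x i a) i (x i)) *
        g (Function.update (Function.update x i a) i (x i))) / Zfun μ i (Function.update x i a)
  rw [Function.update_idem, Function.update_eq_self, Zfun_update]
  ring

lemma PiOp_update (μ : (∀ i, Ω i) → ℝ) (i : Fin n) (h : (∀ i, Ω i) → ℝ) (x : ∀ i, Ω i)
    (a : Ω i) : PiOp μ i h (Function.update x i a) = PiOp μ i h x := by
  unfold PiOp
  rw [Zfun_update]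
  congr 1
  exact Finset.sum_congr rfl fun b _ => by rw [Function.update_idem]

variable [∀ i, Nonempty (Ω i)]

lemma Zfun_pos {μ : (∀ i, Ω i) → ℝ} (hμpos : ∀ x, 0 < μ x) (i : Fin n) (x : ∀ i, Ω i) :
    0 < Zfun μ i x :=
  Finset.sum_pos (fun a _ => hμpos _) Finset.univ_nonempty

lemma PiOp_of_invariant {μ : (∀ i, Ω i) → ℝ} (hμpos : ∀ x, 0 < μ x) {i : Fin n}
    {h : (∀ i, Ω i) → ℝ} (hh : ∀ x a, h (Function.update x i a) = h x) (x : ∀ i, Ω i) :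
    PiOp μ i h x = h x := by
  unfold PiOp
  have : (∑ a, μ (Function.update x i a) * h (Function.update x i a))
      = h x * Zfun μ i x := by
    unfold Zfun
    rw [Finset.mul_sum]
    exact Finset.sum_congr rfl fun a _ => by rw [hh x a]; ring
  rw [this, mul_div_assoc, div_self (ne_of_gt (Zfun_pos hμpos i x)), mul_one]

lemma PiOp_idem {μ : (∀ i, Ω i) → ℝ} (hμpos : ∀ x, 0 < μ x) (i : Fin n)
    (h : (∀ i, Ω i) → ℝ) (x : ∀ i, Ω i) :
    PiOp μ i (PiOp μ i h) x = PiOp μ i h x :=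
  PiOp_of_invariant hμpos (fun x a => PiOp_update μ i h x a) x

lemma ip_PiOp_self {μ : (∀ i, Ω i) → ℝ} (hμpos : ∀ x, 0 < μ x) (i : Fin n)
    (g : (∀ i, Ω i) → ℝ) :
    ip μ g (PiOp μ i g) = ip μ (PiOp μ i g) (PiOp μ i g) := by
  have : PiOp μ i g = PiOp μ i (PiOp μ i g) :=
    funext fun x => (PiOp_idem hμpos i g x).symm
  conv_lhs => rw [this]
  exact ip_PiOp_symm μ i g (PiOp μ i g)

lemma ip_nonneg {μ : (∀ i, Ω i) → ℝ} (hμpos : ∀ x, 0 < μ x) (g : (∀ i, Ω i) → ℝ) :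
    0 ≤ ip μ g g :=
  Finset.sum_nonneg fun x _ => mul_nonneg (hμpos x).le (mul_self_nonneg _)

lemma ip_cs {μ : (∀ i, Ω i) → ℝ} (hμpos : ∀ x, 0 < μ x) (g h : (∀ i, Ω i) → ℝ) :
    (ip μ g h) ^ 2 ≤ ip μ g g * ip μ h h := by
  unfold ip
  have e1 : ∀ x, μ x * (g x * h x)
      = (Real.sqrt (μ x) * g x) * (Real.sqrt (μ x) * h x) := fun x => by
    rw [mul_mul_mul_comm, Real.mul_self_sqrt (hμpos x).le]
  have e2 : ∀ (g : (∀ i, Ω i) → ℝ), ∀ x, μ x * (g x * g x)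
      = (Real.sqrt (μ x) * g x) ^ 2 := fun g x => by
    rw [mul_pow, Real.sq_sqrt (hμpos x).le]; ring
  calc (∑ x, μ x * (g x * h x)) ^ 2
      = (∑ x, (Real.sqrt (μ x) * g x) * (Real.sqrt (μ x) * h x)) ^ 2 := by
        congr 1; exact Finset.sum_congr rfl fun x _ => e1 x
    _ ≤ (∑ x, (Real.sqrt (μ x) * g x) ^ 2) * ∑ x, (Real.sqrt (μ x) * h x) ^ 2 :=
        Finset.sum_mul_sq_le_sq_mul_sq _ _ _
    _ = (∑ x, μ x * (g x * g x)) * ∑ x, μ x * (h x * h x) := by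
        congr 1
        · exact Finset.sum_congr rfl fun x _ => (e2 g x).symm
        · exact Finset.sum_congr rfl fun x _ => (e2 h x).symm

lemma PopOp_eq {μ : (∀ i, Ω i) → ℝ} (h : (∀ i, Ω i) → ℝ) (x : ∀ i, Ω i) :
    PopOp μ h x = (1 / (n : ℝ)) * ∑ i, PiOp μ i h x := by
  unfold PopOp glauber
  have step : ∀ y, ((1 / (n : ℝ)) * ∑ i, (if ∀ j, j ≠ i → y j = x j
      then μ y / ∑ a, μ (Function.update x i a) else 0)) * h y
      = (1 / (n : ℝ)) * ∑ i, (if ∀ j, j ≠ i → y j = x j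
      then μ y * h y / Zfun μ i x else 0) := by
    intro y
    rw [mul_assoc, Finset.sum_mul]
    congr 1
    refine Finset.sum_congr rfl fun i _ => ?_
    rw [ite_mul, zero_mul, div_mul_eq_mul_div]
    rfl
  calc (∑ y, (((1 : ℝ) / (n : ℝ)) * ∑ i, (if ∀ j, j ≠ i → y j = x j
      then μ y / ∑ a, μ (Function.update x i a) else 0)) * h y)
      = ∑ y, (1 / (n : ℝ)) * ∑ i, (if ∀ j, j ≠ i → y j = x j
        then μ y * h y / Zfun μ i x else 0) := Finset.sum_congr rfl fun y _ => step y
    _ = (1 / (n : ℝ)) * ∑ y, ∑ i, (if ∀ j, j ≠ i → y j = x j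
        then μ y * h y / Zfun μ i x else 0) := by rw [Finset.mul_sum]
    _ = (1 / (n : ℝ)) * ∑ i, ∑ y, (if ∀ j, j ≠ i → y j = x j
        then μ y * h y / Zfun μ i x else 0) := by rw [Finset.sum_comm]
    _ = (1 / (n : ℝ)) * ∑ i, PiOp μ i h x := by
        congr 1
        refine Finset.sum_congr rfl fun i _ => ?_
        rw [sum_update_eq x i (fun y => μ y * h y / Zfun μ i x)]
        unfold PiOp
        rw [Finset.sum_div]

lemma ip_PopOp_symm (μ : (∀ i, Ω i) → ℝ) (g h : (∀ i, Ω i) → ℝ) :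
    ip μ g (PopOp μ h) = ip μ (PopOp μ g) h := by
  have e1 : ip μ g (PopOp μ h) = ∑ i, (1 / (n : ℝ)) * ip μ g (PiOp μ i h) := by
    unfold ip
    calc ∑ x, μ x * (g x * PopOp μ h x)
        = ∑ x, ∑ i, (1 / (n : ℝ)) * (μ x * (g x * PiOp μ i h x)) := by
          refine Finset.sum_congr rfl fun x _ => ?_
          rw [PopOp_eq, Finset.mul_sum, Finset.mul_sum, Finset.mul_sum]
          exact Finset.sum_congr rfl fun i _ => by ring
      _ = ∑ i, ∑ x, (1 / (n : ℝ)) * (μ x * (g x * PiOp μ i h x)) := Finset.sum_comm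
      _ = ∑ i, (1 / (n : ℝ)) * ∑ x, μ x * (g x * PiOp μ i h x) :=
          Finset.sum_congr rfl fun i _ => (Finset.mul_sum _ _ _).symm
  have e2 : ip μ (PopOp μ g) h = ∑ i, (1 / (n : ℝ)) * ip μ (PiOp μ i g) h := by
    unfold ip
    calc ∑ x, μ x * (PopOp μ g x * h x)
        = ∑ x, ∑ i, (1 / (n : ℝ)) * (μ x * (PiOp μ i g x * h x)) := by
          refine Finset.sum_congr rfl fun x _ => ?_
          rw [PopOp_eq, Finset.mul_sum, Finset.sum_mul, Finset.mul_sum]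
          exact Finset.sum_congr rfl fun i _ => by ring
      _ = ∑ i, ∑ x, (1 / (n : ℝ)) * (μ x * (PiOp μ i g x * h x)) := Finset.sum_comm
      _ = ∑ i, (1 / (n : ℝ)) * ∑ x, μ x * (PiOp μ i g x * h x) :=
          Finset.sum_congr rfl fun i _ => (Finset.mul_sum _ _ _).symm
  rw [e1, e2]
  exact Finset.sum_congr rfl fun i _ => by rw [ip_PiOp_symm μ i g h]

lemma ip_iter_symm (μ : (∀ i, Ω i) → ℝ) (m : ℕ) (g h : (∀ i, Ω i) → ℝ) :
    ip μ g ((PopOp μ)^[m] h) = ip μ ((PopOp μ)^[m] g) h := by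
  induction m generalizing g h with
  | zero => simp
  | succ m ih =>
    rw [Function.iterate_succ_apply, ih, ip_PopOp_symm, ← Function.iterate_succ_apply' (PopOp μ) m g]

lemma PopOp_one {μ : (∀ i, Ω i) → ℝ} (hμpos : ∀ x, 0 < μ x) (hn : 1 ≤ n) (x : ∀ i, Ω i) :
    PopOp μ (fun _ => (1 : ℝ)) x = 1 := by
  rw [PopOp_eq]
  have : ∀ i : Fin n, PiOp μ i (fun _ => (1 : ℝ)) x = 1 := fun i =>
    PiOp_of_invariant (h := fun _ => (1 : ℝ)) hμpos (fun _ _ => rfl) x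
  rw [Finset.sum_congr rfl fun i _ => this i]
  simp only [Finset.sum_const, Finset.card_univ, Fintype.card_fin, nsmul_eq_mul, mul_one]
  rw [one_div, inv_mul_cancel₀]
  exact Nat.cast_ne_zero.mpr (by omega)

lemma PopOp_sub_const {μ : (∀ i, Ω i) → ℝ} (hμpos : ∀ x, 0 < μ x) (hn : 1 ≤ n)
    (f : (∀ i, Ω i) → ℝ) (c : ℝ) (x : ∀ i, Ω i) :
    PopOp μ (fun y => f y - c) x = PopOp μ f x - c := by
  have h1 : PopOp μ (fun y => f y - c) x
      = PopOp μ f x - c * PopOp μ (fun _ => (1 : ℝ)) x := by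
    unfold PopOp
    rw [Finset.mul_sum, ← Finset.sum_sub_distrib]
    exact Finset.sum_congr rfl fun y _ => by ring
  rw [h1, PopOp_one hμpos hn, mul_one]

lemma PopOp_stationary {μ : (∀ i, Ω i) → ℝ} (hμpos : ∀ x, 0 < μ x) (hn : 1 ≤ n)
    (h : (∀ i, Ω i) → ℝ) :
    ∑ x, μ x * PopOp μ h x = ∑ x, μ x * h x := by
  have e1 : ∑ x, μ x * PopOp μ h x = ip μ (fun _ => (1 : ℝ)) (PopOp μ h) := by
    unfold ip; exact Finset.sum_congr rfl fun x _ => by ring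
  have e2 : ∑ x, μ x * h x = ip μ (fun _ => (1 : ℝ)) h := by
    unfold ip; exact Finset.sum_congr rfl fun x _ => by ring
  rw [e1, e2, ip_PopOp_symm]
  unfold ip
  exact Finset.sum_congr rfl fun x _ => by rw [PopOp_one hμpos hn]

end AuxOps

section StepA
variable [∀ i, Fintype (Ω i)] [∀ i, DecidableEq (Ω i)] [∀ i, Nonempty (Ω i)]
variable {μ : (∀ i, Ω i) → ℝ} {d : (∀ i, Ω i) → (∀ i, Ω i) → ℝ} {κ : ℝ}

lemma contract_step
    (hcoupling : ∀ x y : ∀ i, Ω i, ∃ π : (∀ i, Ω i) × (∀ i, Ω i) → ℝ,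
        (∀ z, 0 ≤ π z) ∧ (∀ a, ∑ b, π (a, b) = glauber μ x a) ∧
        (∀ b, ∑ a, π (a, b) = glauber μ y b) ∧
        (∑ z : (∀ i, Ω i) × (∀ i, Ω i), π z * d z.1 z.2) ≤ κ * d x y)
    (g : (∀ i, Ω i) → ℝ) (L : ℝ) (hL0 : 0 ≤ L)
    (hLip : ∀ a b, g a - g b ≤ L * d a b) (x y : ∀ i, Ω i) :
    PopOp μ g x - PopOp μ g y ≤ κ * d x y * L := by
  obtain ⟨π, hπ0, hπx, hπy, hπd⟩ := hcoupling x y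
  have hx : (∑ p : (∀ i, Ω i) × (∀ i, Ω i), π p * g p.1) = PopOp μ g x := by
    unfold PopOp
    rw [Fintype.sum_prod_type]
    refine Finset.sum_congr rfl fun a _ => ?_
    show (∑ b, π (a, b) * g a) = glauber μ x a * g a
    rw [← Finset.sum_mul, hπx a]
  have hy : (∑ p : (∀ i, Ω i) × (∀ i, Ω i), π p * g p.2) = PopOp μ g y := by
    unfold PopOp
    rw [Fintype.sum_prod_type, Finset.sum_comm]
    refine Finset.sum_congr rfl fun b _ => ?_
    show (∑ a, π (a, b) * g b) = glauber μ y b * g b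
    rw [← Finset.sum_mul, hπy b]
  calc PopOp μ g x - PopOp μ g y
      = ∑ p : (∀ i, Ω i) × (∀ i, Ω i), π p * (g p.1 - g p.2) := by
        rw [← hx, ← hy, ← Finset.sum_sub_distrib]
        exact Finset.sum_congr rfl fun p _ => by ring
    _ ≤ ∑ p : (∀ i, Ω i) × (∀ i, Ω i), π p * (L * d p.1 p.2) :=
        Finset.sum_le_sum fun p _ => mul_le_mul_of_nonneg_left (hLip _ _) (hπ0 p)
    _ = L * ∑ p : (∀ i, Ω i) × (∀ i, Ω i), π p * d p.1 p.2 := by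
        rw [Finset.mul_sum]
        exact Finset.sum_congr rfl fun p _ => by ring
    _ ≤ L * (κ * d x y) := mul_le_mul_of_nonneg_left hπd hL0
    _ = κ * d x y * L := by ring

lemma stepA
    (hμpos : ∀ x, 0 < μ x) (hμsum : ∑ x, μ x = 1)
    (hd0 : ∀ x, d x x = 0) (hdpos : ∀ x y, x ≠ y → 0 < d x y)
    (hdsymm : ∀ x y, d x y = d y x)
    (hcoupling : ∀ x y : ∀ i, Ω i, ∃ π : (∀ i, Ω i) × (∀ i, Ω i) → ℝ,
        (∀ z, 0 ≤ π z) ∧ (∀ a, ∑ b, π (a, b) = glauber μ x a) ∧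
        (∀ b, ∑ a, π (a, b) = glauber μ y b) ∧
        (∑ z : (∀ i, Ω i) × (∀ i, Ω i), π z * d z.1 z.2) ≤ κ * d x y)
    (h : (∀ i, Ω i) → ℝ) (hmean : ∑ x, μ x * h x = 0) :
    ip μ h (PopOp μ h) ≤ κ * ip μ h h := by
  classical
  have hdnn : ∀ a b, 0 ≤ d a b := by
    intro a b
    by_cases hab : a = b
    · subst hab; rw [hd0]
    · exact (hdpos a b hab).le
  by_cases hconst : ∀ x y, h x = h y
  · have hzero : ∀ x, h x = 0 := by
      intro x
      have e1 : ∑ y, μ y * h y = ∑ y, μ y * h x :=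
        Finset.sum_congr rfl fun y _ => by rw [hconst y x]
      rw [hmean] at e1
      have e2 : (∑ y, μ y) * h x = 0 := by rw [Finset.sum_mul, ← e1]
      rw [hμsum, one_mul] at e2
      exact e2
    have : ip μ h (PopOp μ h) = 0 := by
      unfold ip
      refine Finset.sum_eq_zero fun x _ => by rw [hzero x]; ring
    rw [this]
    have : ip μ h h = 0 := by
      unfold ip
      refine Finset.sum_eq_zero fun x _ => by rw [hzero x]; ring
    rw [this, mul_zero]
  · push_neg at hconst
    obtain ⟨x₀, y₀, hne⟩ := hconst
    have hxy : x₀ ≠ y₀ := fun e => hne (by rw [e])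
    have hκ0 : 0 ≤ κ := by
      obtain ⟨π, hπ0, _, _, hπd⟩ := hcoupling x₀ y₀
      have h1 : 0 ≤ ∑ z : (∀ i, Ω i) × (∀ i, Ω i), π z * d z.1 z.2 :=
        Finset.sum_nonneg fun z _ => mul_nonneg (hπ0 z) (hdnn _ _)
      nlinarith [h1.trans hπd, hdpos x₀ y₀ hxy]
    -- Lipschitz constant
    have hPmem : ((x₀, y₀) : (∀ i, Ω i) × (∀ i, Ω i)) ∈
        (Finset.univ.filter (fun p : (∀ i, Ω i) × (∀ i, Ω i) => p.1 ≠ p.2)) := by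
      simp [hxy]
    set P := (Finset.univ.filter (fun p : (∀ i, Ω i) × (∀ i, Ω i) => p.1 ≠ p.2)) with hP
    have hPne : P.Nonempty := ⟨_, hPmem⟩
    set L := P.sup' hPne (fun p => (h p.1 - h p.2) / d p.1 p.2) with hL
    have hLip : ∀ a b, h a - h b ≤ L * d a b := by
      intro a b
      by_cases hab : a = b
      · subst hab; rw [hd0]; simp
      · have hm : ((a, b) : (∀ i, Ω i) × (∀ i, Ω i)) ∈ P := by simp [hP, hab]
        have := Finset.le_sup' (f := fun p : (∀ i, Ω i) × (∀ i, Ω i) =>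
          (h p.1 - h p.2) / d p.1 p.2) hm
        rw [div_le_iff₀ (hdpos a b hab)] at this
        linarith [this]
    have hL0 : 0 ≤ L := by
      rcases le_total (h x₀) (h y₀) with hc | hc
      · have hm : ((y₀, x₀) : (∀ i, Ω i) × (∀ i, Ω i)) ∈ P := by simp [hP, hxy.symm]
        have := Finset.le_sup' (f := fun p : (∀ i, Ω i) × (∀ i, Ω i) =>
          (h p.1 - h p.2) / d p.1 p.2) hm
        refine le_trans (div_nonneg (by simpa using sub_nonneg.2 hc) (hdnn y₀ x₀)) this
      · have := Finset.le_sup' (f := fun p : (∀ i, Ω i) × (∀ i, Ω i) =>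
          (h p.1 - h p.2) / d p.1 p.2) hPmem
        refine le_trans (div_nonneg (by simpa using sub_nonneg.2 hc) (hdnn x₀ y₀)) this
    -- iterated Lipschitz bound
    have hiter : ∀ t (a b : ∀ i, Ω i),
        (PopOp μ)^[t] h a - (PopOp μ)^[t] h b ≤ κ ^ t * L * d a b := by
      intro t
      induction t with
      | zero => intro a b; simpa using hLip a b
      | succ t ih =>
        intro a b
        rw [Function.iterate_succ_apply']
        have step := contract_step hcoupling ((PopOp μ)^[t] h) (κ ^ t * L)
          (mul_nonneg (pow_nonneg hκ0 t) hL0) (fun a b => ih a b) a b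
        calc PopOp μ ((PopOp μ)^[t] h) a - PopOp μ ((PopOp μ)^[t] h) b
            ≤ κ * d a b * (κ ^ t * L) := step
          _ = κ ^ (t + 1) * L * d a b := by rw [pow_succ]; ring
    -- decay of correlations
    set M := L * (∑ x, μ x * (|h x| * d x x₀)) with hM
    have hMnn : 0 ≤ M :=
      mul_nonneg hL0 (Finset.sum_nonneg fun x _ => mul_nonneg (hμpos x).le
        (mul_nonneg (abs_nonneg _) (hdnn _ _)))
    have hdecay : ∀ t, ip μ h ((PopOp μ)^[t] h) ≤ κ ^ t * M := by
      intro t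
      have key : ip μ h ((PopOp μ)^[t] h)
          = ∑ x, μ x * (h x * ((PopOp μ)^[t] h x - (PopOp μ)^[t] h x₀)) := by
        unfold ip
        rw [eq_comm]
        calc ∑ x, μ x * (h x * ((PopOp μ)^[t] h x - (PopOp μ)^[t] h x₀))
            = ∑ x, (μ x * (h x * (PopOp μ)^[t] h x) - (PopOp μ)^[t] h x₀ * (μ x * h x)) :=
              Finset.sum_congr rfl fun x _ => by ring
          _ = ∑ x, μ x * (h x * (PopOp μ)^[t] h x)
              - (PopOp μ)^[t] h x₀ * ∑ x, μ x * h x := by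
              rw [Finset.sum_sub_distrib, Finset.mul_sum]
          _ = ∑ x, μ x * (h x * (PopOp μ)^[t] h x) := by rw [hmean, mul_zero, sub_zero]
      rw [key]
      have hb : ∀ x : ∀ i, Ω i, μ x * (h x * ((PopOp μ)^[t] h x - (PopOp μ)^[t] h x₀))
          ≤ κ ^ t * (L * (μ x * (|h x| * d x x₀))) := by
        intro x
        have habs : |(PopOp μ)^[t] h x - (PopOp μ)^[t] h x₀| ≤ κ ^ t * L * d x x₀ := by
          rw [abs_sub_le_iff]
          refine ⟨hiter t x x₀, ?_⟩
          have h2 := hiter t x₀ x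
          rwa [hdsymm x₀ x] at h2
        calc μ x * (h x * ((PopOp μ)^[t] h x - (PopOp μ)^[t] h x₀))
            ≤ μ x * (|h x| * |(PopOp μ)^[t] h x - (PopOp μ)^[t] h x₀|) := by
              refine mul_le_mul_of_nonneg_left ?_ (hμpos x).le
              calc h x * ((PopOp μ)^[t] h x - (PopOp μ)^[t] h x₀)
                  ≤ |h x * ((PopOp μ)^[t] h x - (PopOp μ)^[t] h x₀)| := le_abs_self _
                _ = |h x| * |(PopOp μ)^[t] h x - (PopOp μ)^[t] h x₀| := abs_mul _ _
          _ ≤ μ x * (|h x| * (κ ^ t * L * d x x₀)) :=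
              mul_le_mul_of_nonneg_left
                (mul_le_mul_of_nonneg_left habs (abs_nonneg _)) (hμpos x).le
          _ = κ ^ t * (L * (μ x * (|h x| * d x x₀))) := by ring
      calc ∑ x, μ x * (h x * ((PopOp μ)^[t] h x - (PopOp μ)^[t] h x₀))
          ≤ ∑ x, κ ^ t * (L * (μ x * (|h x| * d x x₀))) := Finset.sum_le_sum fun x _ => hb x
        _ = κ ^ t * M := by rw [hM, Finset.mul_sum, Finset.mul_sum]
    -- Cauchy-Schwarz chain
    have hcs : ∀ m, (ip μ h ((PopOp μ)^[m] h)) ^ 2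
        ≤ ip μ h h * ip μ h ((PopOp μ)^[2 * m] h) := by
      intro m
      have h1 : ip μ h ((PopOp μ)^[2 * m] h) = ip μ ((PopOp μ)^[m] h) ((PopOp μ)^[m] h) := by
        rw [two_mul, Function.iterate_add_apply]
        exact ip_iter_symm μ m h ((PopOp μ)^[m] h)
      rw [h1]
      exact ip_cs hμpos h ((PopOp μ)^[m] h)
    have a0nn : 0 ≤ ip μ h h := ip_nonneg hμpos h
    -- main comparison
    rcases le_or_gt (ip μ h (PopOp μ h)) 0 with hle | hpos
    · exact hle.trans (mul_nonneg hκ0 a0nn)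
    · by_contra hcon
      push_neg at hcon
      have ha0pos : 0 < ip μ h h := by
        obtain ⟨w, hw⟩ : ∃ w, h w ≠ 0 := by
          by_cases hx0 : h x₀ = 0
          · exact ⟨y₀, fun hy0 => hne (by rw [hx0, hy0])⟩
          · exact ⟨x₀, hx0⟩
        refine Finset.sum_pos' (fun x _ => mul_nonneg (hμpos x).le (mul_self_nonneg _)) ?_
        exact ⟨w, Finset.mem_univ w, mul_pos (hμpos w) (mul_self_pos.2 hw)⟩
      have hone : ip μ h (PopOp μ h) = ip μ h ((PopOp μ)^[1] h) := by
        rw [Function.iterate_one]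
      have hind : ∀ k, (ip μ h (PopOp μ h)) ^ (2 ^ k)
          ≤ (ip μ h h) ^ (2 ^ k - 1) * ip μ h ((PopOp μ)^[2 ^ k] h) := by
        intro k
        induction k with
        | zero => simpa using le_of_eq hone
        | succ k ih =>
          have h2k : (1 : ℕ) ≤ 2 ^ k := Nat.one_le_two_pow
          have e2 : (2 : ℕ) * 2 ^ k = 2 ^ (k + 1) := by rw [pow_succ]; ring
          calc (ip μ h (PopOp μ h)) ^ (2 ^ (k + 1))
              = ((ip μ h (PopOp μ h)) ^ (2 ^ k)) ^ 2 := by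
                rw [pow_succ 2 k, pow_mul]
            _ ≤ ((ip μ h h) ^ (2 ^ k - 1) * ip μ h ((PopOp μ)^[2 ^ k] h)) ^ 2 :=
                pow_le_pow_left₀ (pow_nonneg hpos.le _) ih 2
            _ = (ip μ h h) ^ ((2 ^ k - 1) * 2) * (ip μ h ((PopOp μ)^[2 ^ k] h)) ^ 2 := by
                rw [mul_pow, ← pow_mul]
            _ ≤ (ip μ h h) ^ ((2 ^ k - 1) * 2)
                * (ip μ h h * ip μ h ((PopOp μ)^[2 * 2 ^ k] h)) :=
                mul_le_mul_of_nonneg_left (hcs (2 ^ k)) (pow_nonneg a0nn _)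
            _ = (ip μ h h) ^ (2 ^ (k + 1) - 1) * ip μ h ((PopOp μ)^[2 ^ (k + 1)] h) := by
                have e3 : (2 ^ k - 1) * 2 + 1 = 2 ^ (k + 1) - 1 := by
                  rw [pow_succ]
                  omega
                rw [← mul_assoc, ← pow_succ, e2, e3]
      have hfin : ∀ k, (ip μ h (PopOp μ h)) ^ (2 ^ k)
          ≤ (ip μ h h) ^ (2 ^ k - 1) * (κ ^ (2 ^ k) * M) :=
        fun k => (hind k).trans
          (mul_le_mul_of_nonneg_left (hdecay (2 ^ k)) (pow_nonneg a0nn _))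
      rcases eq_or_lt_of_le hκ0 with hκz | hκp
      · have := hfin 1
        rw [← hκz] at this
        norm_num at this
        nlinarith [hpos]
      · have ha1 : κ * ip μ h h < ip μ h (PopOp μ h) := hcon
        have hr : 1 < ip μ h (PopOp μ h) / (κ * ip μ h h) :=
          (one_lt_div (mul_pos hκp ha0pos)).2 ha1
        have hbound : ∀ k, (ip μ h (PopOp μ h) / (κ * ip μ h h)) ^ (2 ^ k)
            ≤ M / ip μ h h := by
          intro k
          rw [div_pow, div_le_div_iff₀ (by positivity) ha0pos]
          have h2k : (1 : ℕ) ≤ 2 ^ k := Nat.one_le_two_pow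
          calc (ip μ h (PopOp μ h)) ^ (2 ^ k) * ip μ h h
              ≤ ((ip μ h h) ^ (2 ^ k - 1) * (κ ^ (2 ^ k) * M)) * ip μ h h :=
                mul_le_mul_of_nonneg_right (hfin k) a0nn
            _ = M * (κ ^ (2 ^ k) * ((ip μ h h) ^ (2 ^ k - 1) * ip μ h h)) := by ring
            _ = M * (κ * ip μ h h) ^ (2 ^ k) := by
                rw [mul_pow]
                congr 2
                rw [← pow_succ]
                congr 1
                omega
        obtain ⟨k0, hk0⟩ := pow_unbounded_of_one_lt (M / ip μ h h) hr
        have hmono : (ip μ h (PopOp μ h) / (κ * ip μ h h)) ^ k0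
            ≤ (ip μ h (PopOp μ h) / (κ * ip μ h h)) ^ (2 ^ k0) :=
          pow_le_pow_right₀ hr.le (Nat.lt_two_pow_self (n := k0)).le
        linarith [hbound k0, hk0, hmono]

end StepA

section Key
variable [∀ i, Fintype (Ω i)] [∀ i, DecidableEq (Ω i)] [∀ i, Nonempty (Ω i)]
variable {μ : (∀ i, Ω i) → ℝ} {d : (∀ i, Ω i) → (∀ i, Ω i) → ℝ} {κ ε : ℝ}

lemma ip_comm (μ : (∀ i, Ω i) → ℝ) (g h : (∀ i, Ω i) → ℝ) : ip μ g h = ip μ h g := by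
  unfold ip
  exact Finset.sum_congr rfl fun x _ => by ring

lemma ip_add_right (μ : (∀ i, Ω i) → ℝ) (g h1 h2 : (∀ i, Ω i) → ℝ) :
    ip μ g (fun x => h1 x + h2 x) = ip μ g h1 + ip μ g h2 := by
  unfold ip
  rw [← Finset.sum_add_distrib]
  exact Finset.sum_congr rfl fun x _ => by ring

lemma ite_mul_ite_zero {p q : Prop} [Decidable p] [Decidable q] (a b : ℝ) :
    (if p then a else 0) * (if q then b else 0) = if p ∧ q then a * b else 0 := by
  split_ifs <;> simp_all

lemma marg_weighted (μ : (∀ i, Ω i) → ℝ) (G : (Σ i, Ω i) → ℝ) :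
    (∑ u : Σ i, Ω i, marg μ u * G u) = ∑ i, ∑ x, μ x * G ⟨i, x i⟩ := by
  rw [← Finset.univ_sigma_univ, Finset.sum_sigma]
  refine Finset.sum_congr rfl fun i _ => ?_
  calc ∑ a, marg μ ⟨i, a⟩ * G ⟨i, a⟩
      = ∑ a, ∑ x, (if x i = a then μ x * G ⟨i, a⟩ else 0) := by
        refine Finset.sum_congr rfl fun a _ => ?_
        unfold marg
        rw [Finset.sum_mul]
        refine Finset.sum_congr rfl fun x _ => ?_
        rw [ite_mul, zero_mul]
    _ = ∑ x, ∑ a, (if x i = a then μ x * G ⟨i, a⟩ else 0) := Finset.sum_comm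
    _ = ∑ x, μ x * G ⟨i, x i⟩ := by
        refine Finset.sum_congr rfl fun x _ => ?_
        rw [Finset.sum_ite_eq]
        simp

lemma sigma_ite_sum (v : (Σ i, Ω i) → ℝ) (x : ∀ i, Ω i) :
    (∑ u : Σ i, Ω i, if x u.1 = u.2 then v u else 0) = ∑ i, v ⟨i, x i⟩ := by
  rw [← Finset.univ_sigma_univ, Finset.sum_sigma]
  refine Finset.sum_congr rfl fun i _ => ?_
  show (∑ s : Ω i, if x i = s then v ⟨i, s⟩ else 0) = v ⟨i, x i⟩
  rw [Finset.sum_ite_eq]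
  simp

lemma pair_weighted (μ : (∀ i, Ω i) → ℝ) (v : (Σ i, Ω i) → ℝ) :
    (∑ u : Σ i, Ω i, ∑ w : Σ i, Ω i, pairMarg μ u w * (v u * v w))
      = ∑ x, μ x * ((∑ i, v ⟨i, x i⟩) * (∑ i, v ⟨i, x i⟩)) := by
  calc ∑ u : Σ i, Ω i, ∑ w : Σ i, Ω i, pairMarg μ u w * (v u * v w)
      = ∑ u : Σ i, Ω i, ∑ w : Σ i, Ω i, ∑ x,
          (if x u.1 = u.2 ∧ x w.1 = w.2 then μ x * (v u * v w) else 0) := by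
        refine Finset.sum_congr rfl fun u _ => Finset.sum_congr rfl fun w _ => ?_
        unfold pairMarg
        rw [Finset.sum_mul]
        refine Finset.sum_congr rfl fun x _ => ?_
        rw [ite_mul, zero_mul]
    _ = ∑ u : Σ i, Ω i, ∑ x, ∑ w : Σ i, Ω i,
          (if x u.1 = u.2 ∧ x w.1 = w.2 then μ x * (v u * v w) else 0) :=
        Finset.sum_congr rfl fun u _ => Finset.sum_comm
    _ = ∑ x, ∑ u : Σ i, Ω i, ∑ w : Σ i, Ω i,
          (if x u.1 = u.2 ∧ x w.1 = w.2 then μ x * (v u * v w) else 0) :=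
        Finset.sum_comm
    _ = ∑ x, μ x * ((∑ i, v ⟨i, x i⟩) * (∑ i, v ⟨i, x i⟩)) := by
        refine Finset.sum_congr rfl fun x _ => ?_
        rw [← sigma_ite_sum v x, Finset.sum_mul_sum, Finset.mul_sum]
        refine Finset.sum_congr rfl fun u _ => ?_
        rw [Finset.mul_sum]
        refine Finset.sum_congr rfl fun w _ => ?_
        rw [ite_mul_ite_zero, mul_ite, mul_zero]

lemma perI (hμpos : ∀ x, 0 < μ x) (i : Fin n) (v : (Σ i, Ω i) → ℝ) :
    ip μ (fun x => ∑ j, v ⟨j, x j⟩) (fun x => ∑ j, v ⟨j, x j⟩)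
      - ip μ (fun x => ∑ j, v ⟨j, x j⟩) (PiOp μ i (fun x => ∑ j, v ⟨j, x j⟩))
    ≤ ip μ (fun x => v ⟨i, x i⟩) (fun x => v ⟨i, x i⟩) := by
  set f : (∀ i, Ω i) → ℝ := fun x => ∑ j, v ⟨j, x j⟩ with hf
  set gi : (∀ i, Ω i) → ℝ := fun x => v ⟨i, x i⟩ with hgi
  set ri : (∀ i, Ω i) → ℝ := fun x => ∑ j ∈ Finset.univ.erase i, v ⟨j, x j⟩ with hri'
  have hfg : ∀ x, f x = gi x + ri x := fun x =>
    (Finset.add_sum_erase Finset.univ (fun j => v ⟨j, x j⟩) (Finset.mem_univ i)).symm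
  have hriinv : ∀ x a, ri (Function.update x i a) = ri x := by
    intro x a
    refine Finset.sum_congr rfl fun j hj => ?_
    rw [Function.update_of_ne (Finset.mem_erase.1 hj).1]
  have hPiri : ∀ x, PiOp μ i ri x = ri x := PiOp_of_invariant hμpos hriinv
  have hZne : ∀ x, Zfun μ i x ≠ 0 := fun x => ne_of_gt (Zfun_pos hμpos i x)
  have hPif : ∀ x, PiOp μ i f x = PiOp μ i gi x + ri x := by
    intro x
    have hnum : (∑ a, μ (Function.update x i a) * f (Function.update x i a))
        = (∑ a, μ (Function.update x i a) * gi (Function.update x i a))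
          + ri x * Zfun μ i x := by
      calc ∑ a, μ (Function.update x i a) * f (Function.update x i a)
          = ∑ a, (μ (Function.update x i a) * gi (Function.update x i a)
              + ri x * μ (Function.update x i a)) := by
            refine Finset.sum_congr rfl fun a _ => ?_
            rw [hfg (Function.update x i a), hriinv x a]
            ring
        _ = (∑ a, μ (Function.update x i a) * gi (Function.update x i a))
              + ri x * ∑ a, μ (Function.update x i a) := by
            rw [Finset.sum_add_distrib, Finset.mul_sum]
    unfold PiOp
    rw [hnum, add_div, mul_div_assoc, div_self (hZne x), mul_one]
  have hfeq : f = fun x => gi x + ri x := funext hfg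
  have hPifeq : PiOp μ i f = fun x => PiOp μ i gi x + ri x := funext hPif
  have e1 : ip μ f (PiOp μ i f) = ip μ f (PiOp μ i gi) + ip μ f ri := by
    rw [hPifeq, ip_add_right]
  have e2 : ip μ f f = ip μ f gi + ip μ f ri := by
    conv_lhs => rw [show ip μ f f = ip μ f (fun x => gi x + ri x) from by rw [← hfeq]]
    rw [ip_add_right]
  have e3 : ip μ f gi = ip μ gi gi + ip μ ri gi := by
    rw [ip_comm, show ip μ gi f = ip μ gi (fun x => gi x + ri x) from by rw [← hfeq],
      ip_add_right, ip_comm μ gi ri]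
  have e4 : ip μ f (PiOp μ i gi)
      = ip μ gi (PiOp μ i gi) + ip μ ri (PiOp μ i gi) := by
    rw [ip_comm, show ip μ (PiOp μ i gi) f = ip μ (PiOp μ i gi) (fun x => gi x + ri x)
      from by rw [← hfeq], ip_add_right, ip_comm μ (PiOp μ i gi) gi,
      ip_comm μ (PiOp μ i gi) ri]
  have e5 : ip μ ri (PiOp μ i gi) = ip μ ri gi := by
    rw [ip_PiOp_symm, show PiOp μ i ri = ri from funext hPiri]
  have e6 : ip μ gi (PiOp μ i gi) = ip μ (PiOp μ i gi) (PiOp μ i gi) :=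
    ip_PiOp_self hμpos i gi
  have e7 : 0 ≤ ip μ (PiOp μ i gi) (PiOp μ i gi) := ip_nonneg hμpos _
  linarith [e1, e2, e3, e4, e5, e6, e7]

lemma key_quadratic
    (hn : 1 ≤ n) (hε : 0 < ε) (hκ : κ ≤ 1 - ε / n)
    (hμpos : ∀ x, 0 < μ x) (hμsum : ∑ x, μ x = 1)
    (hd0 : ∀ x, d x x = 0) (hdpos : ∀ x y, x ≠ y → 0 < d x y)
    (hdsymm : ∀ x y, d x y = d y x)
    (hcoupling : ∀ x y : ∀ i, Ω i, ∃ π : (∀ i, Ω i) × (∀ i, Ω i) → ℝ,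
        (∀ z, 0 ≤ π z) ∧ (∀ a, ∑ b, π (a, b) = glauber μ x a) ∧
        (∀ b, ∑ a, π (a, b) = glauber μ y b) ∧
        (∑ z : (∀ i, Ω i) × (∀ i, Ω i), π z * d z.1 z.2) ≤ κ * d x y)
    (v : (Σ i, Ω i) → ℝ) :
    ε * (∑ u : Σ i, Ω i, ∑ w : Σ i, Ω i,
        (pairMarg μ u w - marg μ u * marg μ w) * (v u * v w))
      ≤ ∑ u : Σ i, Ω i, marg μ u * (v u) ^ 2 := by
  have hn0 : (0 : ℝ) < (n : ℝ) := by
    have : (1 : ℝ) ≤ (n : ℝ) := by exact_mod_cast hn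
    linarith
  obtain ⟨f, hf⟩ : ∃ f : (∀ i, Ω i) → ℝ, f = fun x => ∑ j, v ⟨j, x j⟩ := ⟨_, rfl⟩
  obtain ⟨c, hc⟩ : ∃ c : ℝ, c = ∑ x, μ x * f x := ⟨_, rfl⟩
  obtain ⟨h, hh⟩ : ∃ h : (∀ i, Ω i) → ℝ, h = fun x => f x - c := ⟨_, rfl⟩
  -- mean of f
  have hEf : c = ∑ u : Σ i, Ω i, marg μ u * v u := by
    rw [marg_weighted μ v, hc]
    calc ∑ x, μ x * f x = ∑ x, ∑ i, μ x * v ⟨i, x i⟩ :=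
          Finset.sum_congr rfl fun x _ => by rw [hf]; exact Finset.mul_sum _ _ _
      _ = ∑ i, ∑ x, μ x * v ⟨i, x i⟩ := Finset.sum_comm
  -- second moment
  have hEff : ip μ f f = ∑ u : Σ i, Ω i, ∑ w : Σ i, Ω i, pairMarg μ u w * (v u * v w) := by
    rw [pair_weighted μ v]
    unfold ip
    exact Finset.sum_congr rfl fun x _ => by rw [hf]
  -- mean zero of h
  have hmean : ∑ x, μ x * h x = 0 := by
    calc ∑ x, μ x * h x = ∑ x, (μ x * f x - c * μ x) :=
          Finset.sum_congr rfl fun x _ => by rw [hh]; ring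
      _ = (∑ x, μ x * f x) - c * ∑ x, μ x := by
          rw [Finset.sum_sub_distrib, Finset.mul_sum]
      _ = 0 := by rw [← hc, hμsum, mul_one, sub_self]
  -- variance identity
  have hipff : ip μ h h = ip μ f f - c ^ 2 := by
    unfold ip
    calc ∑ x, μ x * (h x * h x)
        = ∑ x, (μ x * (f x * f x) - (2 * c) * (μ x * f x) + c ^ 2 * μ x) :=
          Finset.sum_congr rfl fun x _ => by rw [hh]; ring
      _ = (∑ x, μ x * (f x * f x)) - (2 * c) * (∑ x, μ x * f x) + c ^ 2 * ∑ x, μ x := by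
          rw [Finset.sum_add_distrib, Finset.sum_sub_distrib, ← Finset.mul_sum,
            ← Finset.mul_sum]
      _ = (∑ x, μ x * (f x * f x)) - c ^ 2 := by rw [← hc, hμsum]; ring
  -- Pop of h
  have hPoph : PopOp μ h = fun x => PopOp μ f x - c := by
    funext x
    rw [hh]
    exact PopOp_sub_const hμpos hn f c x
  have hipPop : ip μ h (PopOp μ h) = ip μ f (PopOp μ f) - c ^ 2 := by
    rw [hPoph]
    unfold ip
    calc ∑ x, μ x * (h x * (PopOp μ f x - c))
        = ∑ x, (μ x * (f x * PopOp μ f x) - c * (μ x * PopOp μ f x)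
            - c * (μ x * f x) + c ^ 2 * μ x) :=
          Finset.sum_congr rfl fun x _ => by rw [hh]; ring
      _ = (∑ x, μ x * (f x * PopOp μ f x)) - c * (∑ x, μ x * PopOp μ f x)
          - c * (∑ x, μ x * f x) + c ^ 2 * ∑ x, μ x := by
          rw [Finset.sum_add_distrib, Finset.sum_sub_distrib, Finset.sum_sub_distrib,
            ← Finset.mul_sum, ← Finset.mul_sum, ← Finset.mul_sum]
      _ = (∑ x, μ x * (f x * PopOp μ f x)) - c ^ 2 := by
          rw [PopOp_stationary hμpos hn f, ← hc, hμsum]; ring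
  -- Dirichlet bound
  have hQd : (∑ u : Σ i, Ω i, marg μ u * (v u) ^ 2)
      = ∑ i, ip μ (fun x => v ⟨i, x i⟩) (fun x => v ⟨i, x i⟩) := by
    rw [marg_weighted μ (fun u => (v u) ^ 2)]
    refine Finset.sum_congr rfl fun i _ => ?_
    unfold ip
    exact Finset.sum_congr rfl fun x _ => by ring
  have hipPopf : ip μ f (PopOp μ f) = ∑ i, (1 / (n : ℝ)) * ip μ f (PiOp μ i f) := by
    unfold ip
    calc ∑ x, μ x * (f x * PopOp μ f x)
        = ∑ x, ∑ i, (1 / (n : ℝ)) * (μ x * (f x * PiOp μ i f x)) := by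
          refine Finset.sum_congr rfl fun x _ => ?_
          rw [PopOp_eq, Finset.mul_sum, Finset.mul_sum, Finset.mul_sum]
          exact Finset.sum_congr rfl fun i _ => by ring
      _ = ∑ i, ∑ x, (1 / (n : ℝ)) * (μ x * (f x * PiOp μ i f x)) := Finset.sum_comm
      _ = ∑ i, (1 / (n : ℝ)) * ∑ x, μ x * (f x * PiOp μ i f x) :=
          Finset.sum_congr rfl fun i _ => (Finset.mul_sum _ _ _).symm
  have hipffsum : ip μ f f = ∑ i : Fin n, (1 / (n : ℝ)) * ip μ f f := by
    rw [Finset.sum_const, Finset.card_univ, Fintype.card_fin, nsmul_eq_mul]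
    rw [← mul_assoc, mul_one_div, div_self (ne_of_gt hn0), one_mul]
  have hdir : ip μ f f - ip μ f (PopOp μ f)
      ≤ (1 / (n : ℝ)) * ∑ i, ip μ (fun x => v ⟨i, x i⟩) (fun x => v ⟨i, x i⟩) := by
    rw [hipPopf]
    conv_lhs => rw [hipffsum]
    rw [← Finset.sum_sub_distrib, Finset.mul_sum]
    refine Finset.sum_le_sum fun i _ => ?_
    rw [← mul_sub]
    refine mul_le_mul_of_nonneg_left ?_ (by positivity)
    rw [hf]
    exact perI hμpos i v
  -- step A
  have hstep : ip μ h (PopOp μ h) ≤ κ * ip μ h h :=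
    stepA hμpos hμsum hd0 hdpos hdsymm hcoupling h hmean
  -- covariance identity
  have hQc : (∑ u : Σ i, Ω i, ∑ w : Σ i, Ω i,
      (pairMarg μ u w - marg μ u * marg μ w) * (v u * v w)) = ip μ h h := by
    have hsq : (∑ u : Σ i, Ω i, ∑ w : Σ i, Ω i,
        (marg μ u * marg μ w) * (v u * v w)) = c ^ 2 := by
      rw [hEf, sq, Finset.sum_mul_sum]
      refine Finset.sum_congr rfl fun u _ => Finset.sum_congr rfl fun w _ => by ring
    calc ∑ u : Σ i, Ω i, ∑ w : Σ i, Ω i,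
        (pairMarg μ u w - marg μ u * marg μ w) * (v u * v w)
        = (∑ u : Σ i, Ω i, ∑ w : Σ i, Ω i, pairMarg μ u w * (v u * v w))
          - ∑ u : Σ i, Ω i, ∑ w : Σ i, Ω i, (marg μ u * marg μ w) * (v u * v w) := by
          rw [← Finset.sum_sub_distrib]
          refine Finset.sum_congr rfl fun u _ => ?_
          rw [← Finset.sum_sub_distrib]
          exact Finset.sum_congr rfl fun w _ => by ring
      _ = ip μ f f - c ^ 2 := by rw [← hEff, hsq]
      _ = ip μ h h := hipff.symm
  -- chain
  have hQcnn : 0 ≤ ip μ h h := ip_nonneg hμpos h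
  have hchain : (ε / (n : ℝ)) * ip μ h h
      ≤ (1 / (n : ℝ)) * ∑ u : Σ i, Ω i, marg μ u * (v u) ^ 2 := by
    have c1 : (ε / (n : ℝ)) * ip μ h h ≤ (1 - κ) * ip μ h h :=
      mul_le_mul_of_nonneg_right (by linarith) hQcnn
    have c2 : (1 - κ) * ip μ h h ≤ ip μ h h - ip μ h (PopOp μ h) := by nlinarith [hstep]
    have c3 : ip μ h h - ip μ h (PopOp μ h) = ip μ f f - ip μ f (PopOp μ f) := by
      rw [hipff, hipPop]; ring
    rw [hQd]
    linarith [hdir]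
  rw [hQc]
  have := mul_le_mul_of_nonneg_left hchain (le_of_lt hn0)
  calc ε * ip μ h h = (n : ℝ) * ((ε / (n : ℝ)) * ip μ h h) := by
        field_simp
    _ ≤ (n : ℝ) * ((1 / (n : ℝ)) * ∑ u : Σ i, Ω i, marg μ u * (v u) ^ 2) := this
    _ = ∑ u : Σ i, Ω i, marg μ u * (v u) ^ 2 := by
        field_simp

end Key

section Final
variable [∀ i, Fintype (Ω i)] [∀ i, DecidableEq (Ω i)] [∀ i, Nonempty (Ω i)]

lemma marg_pos {μ : (∀ i, Ω i) → ℝ} (hμpos : ∀ x, 0 < μ x) (u : Σ i, Ω i) :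
    0 < marg μ u := by
  unfold marg
  refine Finset.sum_pos' (fun x _ => ?_) ?_
  · by_cases hc : x u.1 = u.2 <;> simp [hc, (hμpos x).le]
  · refine ⟨Function.update (Classical.arbitrary _) u.1 u.2, Finset.mem_univ _, ?_⟩
    rw [if_pos (Function.update_self _ _ _)]
    exact hμpos _

lemma pairMarg_self (μ : (∀ i, Ω i) → ℝ) (u : Σ i, Ω i) :
    pairMarg μ u u = marg μ u := by
  unfold pairMarg marg
  exact Finset.sum_congr rfl fun x _ => by simp

end Final

/-- If the Glauber dynamics of `μ` on a finite product space admits, for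
every pair of states, a one-step coupling contracting a metric `d` by a factor
`κ ≤ 1 − ε/n`, then `μ` is `(1/ε)`-spectrally independent. -/
theorem contractive_coupling_implies_spectral_independence
    [∀ i, Fintype (Ω i)] [∀ i, DecidableEq (Ω i)] [∀ i, Nonempty (Ω i)]
    (μ : (∀ i, Ω i) → ℝ) (d : (∀ i, Ω i) → (∀ i, Ω i) → ℝ) (κ ε : ℝ)
    (hn : 1 ≤ n) (hε : 0 < ε) (hκ : κ ≤ 1 - ε / n)
    (hμpos : ∀ x, 0 < μ x) (hμsum : ∑ x, μ x = 1)
    (hd0 : ∀ x, d x x = 0) (hdpos : ∀ x y, x ≠ y → 0 < d x y)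
    (hdsymm : ∀ x y, d x y = d y x)
    (hdtri : ∀ x y z, d x z ≤ d x y + d y z)
    (hcoupling : ∀ x y : ∀ i, Ω i,
      ∃ π : (∀ i, Ω i) × (∀ i, Ω i) → ℝ,
        (∀ z, 0 ≤ π z) ∧
        (∀ a, ∑ b, π (a, b) = glauber μ x a) ∧
        (∀ b, ∑ a, π (a, b) = glauber μ y b) ∧
        (∑ z : (∀ i, Ω i) × (∀ i, Ω i), π z * d z.1 z.2) ≤ κ * d x y) :
    ∀ t : ℝ, Module.End.HasEigenvalue (Matrix.toLin' (corrMatrixProd μ)) t → t ≤ 1 / ε := by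
  intro t ht
  obtain ⟨v, hv⟩ := ht.exists_hasEigenvector
  have hvne : v ≠ 0 := hv.2
  have happ : (Matrix.toLin' (corrMatrixProd μ)) v = t • v := hv.apply_eq_smul
  rw [Matrix.toLin'_apply] at happ
  have hveq : ∀ u : Σ i, Ω i, (∑ w : Σ i, Ω i, corrMatrixProd μ u w * v w) = t * v u := by
    intro u
    have := congrFun happ u
    simpa [Matrix.mulVec, dotProduct] using this
  have hCeq : ∀ u : Σ i, Ω i,
      (∑ w : Σ i, Ω i, (pairMarg μ u w - marg μ u * marg μ w) * v w)
        = t * (marg μ u * v u) := by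
    intro u
    have hm := marg_pos hμpos u
    have expand : (∑ w : Σ i, Ω i, (pairMarg μ u w - marg μ u * marg μ w) * v w)
        = marg μ u * ∑ w : Σ i, Ω i, corrMatrixProd μ u w * v w := by
      rw [Finset.mul_sum]
      refine Finset.sum_congr rfl fun w _ => ?_
      unfold corrMatrixProd
      by_cases huw : u = w
      · subst huw
        rw [if_pos rfl, pairMarg_self]
        ring
      · rw [if_neg huw]
        field_simp
    rw [expand, hveq u]
    ring
  have hsum : (∑ u : Σ i, Ω i, ∑ w : Σ i, Ω i,
      (pairMarg μ u w - marg μ u * marg μ w) * (v u * v w))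
      = t * ∑ u : Σ i, Ω i, marg μ u * (v u) ^ 2 := by
    rw [Finset.mul_sum]
    refine Finset.sum_congr rfl fun u _ => ?_
    calc ∑ w : Σ i, Ω i, (pairMarg μ u w - marg μ u * marg μ w) * (v u * v w)
        = v u * ∑ w : Σ i, Ω i, (pairMarg μ u w - marg μ u * marg μ w) * v w := by
          rw [Finset.mul_sum]
          exact Finset.sum_congr rfl fun w _ => by ring
      _ = v u * (t * (marg μ u * v u)) := by rw [hCeq u]
      _ = t * (marg μ u * (v u) ^ 2) := by ring
  have hQdpos : 0 < ∑ u : Σ i, Ω i, marg μ u * (v u) ^ 2 := by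
    obtain ⟨u, hu⟩ := Function.ne_iff.1 hvne
    refine Finset.sum_pos' (fun w _ => mul_nonneg (marg_pos hμpos w).le (sq_nonneg _)) ?_
    refine ⟨u, Finset.mem_univ u, mul_pos (marg_pos hμpos u) ?_⟩
    exact lt_of_le_of_ne (sq_nonneg _) (Ne.symm (pow_ne_zero 2 hu))
  have hk := key_quadratic hn hε hκ hμpos hμsum hd0 hdpos hdsymm hcoupling v
  rw [hsum] at hk
  rw [le_div_iff₀ hε]
  nlinarith [hQdpos, hk]

end
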